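/- Assume φ₀ : P → I is a linear isomorphism (the uniqueness condition (U)). Then for every input sequence z_in : ℤ → P vanishing for negative arguments there exists exactly one output sequence z_out : ℤ → P vanishing for negative arguments such that the linear model equations hold for every k ≥ 0; i.e. the condition (U) makes the scheme a well-defined explicit scheme with a unique reflection response. -/

import Mathlib

set_option linter.unusedVariables false

noncomputable def dscAux {P I : Type*} [AddCommGroup P] [Module ℝ P] [AddCommGroup I] [Module ℝ I]
    (nb : P →ₗ[ℝ] P) (φ ψ : ℕ → (P →ₗ[ℝ] I)) (s : Finset ℕ) (e : P ≃ₗ[ℝ] I)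
    (z_in : ℤ → P) : ℕ → P
  | n =>
    -(e.symm (∑ μ ∈ s,
      ((if μ = 0 then 0 else φ μ ((fun j => if h : 0 ≤ j ∧ j < (n : ℤ) then dscAux nb φ ψ s e z_in j.toNat else 0) ((n : ℤ) - μ))) + φ μ (z_in ((n : ℤ) - μ)) +
        ψ μ (nb (z_in ((n : ℤ) - μ)) + nb ((fun j => if h : 0 ≤ j ∧ j < (n : ℤ) then dscAux nb φ ψ s e z_in j.toNat else 0) ((n : ℤ) - μ - 1))))))
decreasing_by all_goals omega

noncomputable def dscSol {P I : Type*} [AddCommGroup P] [Module ℝ P] [AddCommGroup I] [Module ℝ I]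
    (nb : P →ₗ[ℝ] P) (φ ψ : ℕ → (P →ₗ[ℝ] I)) (s : Finset ℕ) (e : P ≃ₗ[ℝ] I)
    (z_in : ℤ → P) : ℤ → P :=
  fun j => if 0 ≤ j then dscAux nb φ ψ s e z_in j.toNat else 0

lemma dscAux_eq {P I : Type*} [AddCommGroup P] [Module ℝ P] [AddCommGroup I] [Module ℝ I]
    (nb : P →ₗ[ℝ] P) (φ ψ : ℕ → (P →ₗ[ℝ] I)) (s : Finset ℕ) (e : P ≃ₗ[ℝ] I)
    (z_in : ℤ → P) (n : ℕ) :
    dscAux nb φ ψ s e z_in n = -(e.symm (∑ μ ∈ s,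
      ((if μ = 0 then 0 else φ μ (dscSol nb φ ψ s e z_in ((n : ℤ) - μ))) + φ μ (z_in ((n : ℤ) - μ)) +
        ψ μ (nb (z_in ((n : ℤ) - μ)) + nb (dscSol nb φ ψ s e z_in ((n : ℤ) - μ - 1)))))) := by
  have hg : ∀ j : ℤ, j < (n : ℤ) →
      (if h : 0 ≤ j ∧ j < (n : ℤ) then dscAux nb φ ψ s e z_in j.toNat else 0)
        = dscSol nb φ ψ s e z_in j := by
    intro j hj
    unfold dscSol
    by_cases h0 : 0 ≤ j
    · rw [dif_pos ⟨h0, hj⟩, if_pos h0]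
    · rw [dif_neg (by tauto), if_neg h0]
  rw [dscAux]
  congr 2
  refine Finset.sum_congr rfl ?_
  intro μ _
  by_cases hμ : μ = 0
  · simp only [hμ, if_pos, reduceIte]
    rw [hg _ (by omega)]
  · beta_reduce
    rw [if_neg hμ, if_neg hμ, hg _ (by omega), hg _ (by omega)]


/-- Uniqueness condition (U): if `φ 0` is a linear isomorphism, then for every
input sequence `z_in` vanishing for negative arguments there is exactly one
output sequence `z_out` vanishing for negative arguments such that the linear
DSC model equations hold for every `k ≥ 0`. -/
theorem stmt_1
    {P I : Type*} [AddCommGroup P] [Module ℝ P] [AddCommGroup I] [Module ℝ I]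
    (nb : P →ₗ[ℝ] P) (hnb : ∀ x, nb (nb x) = x)
    (φ ψ : ℕ → (P →ₗ[ℝ] I))
    (hφfin : {μ : ℕ | φ μ ≠ 0}.Finite) (hψfin : {μ : ℕ | ψ μ ≠ 0}.Finite)
    (e : P ≃ₗ[ℝ] I) (he : (e : P →ₗ[ℝ] I) = φ 0)
    (z_in : ℤ → P)
    (hin : ∀ k : ℤ, k < 0 → z_in k = 0) :
    ∃! z_out : ℤ → P,
      (∀ k : ℤ, k < 0 → z_out k = 0) ∧
      (∀ k : ℕ,
        (∑ᶠ μ : ℕ,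
          (φ μ (z_in ((k : ℤ) - μ) + z_out ((k : ℤ) - μ)) +
            ψ μ (nb (z_in ((k : ℤ) - μ)) + nb (z_out ((k : ℤ) - μ - 1))))) = 0) := by
  classical
  set s : Finset ℕ := insert 0 ((hφfin.union hψfin).toFinset) with hs
  have h0s : 0 ∈ s := Finset.mem_insert_self _ _
  -- finsum reduction
  have hsum : ∀ z : ℤ → P, ∀ k : ℕ,
      (∑ᶠ μ : ℕ,
          (φ μ (z_in ((k : ℤ) - μ) + z ((k : ℤ) - μ)) +
            ψ μ (nb (z_in ((k : ℤ) - μ)) + nb (z ((k : ℤ) - μ - 1)))))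
        = ∑ μ ∈ s,
          (φ μ (z_in ((k : ℤ) - μ) + z ((k : ℤ) - μ)) +
            ψ μ (nb (z_in ((k : ℤ) - μ)) + nb (z ((k : ℤ) - μ - 1)))) := by
    intro z k
    apply finsum_eq_finset_sum_of_support_subset
    intro μ hμ
    simp only [Function.mem_support] at hμ
    by_contra hmem
    have hφ0 : φ μ = 0 := by
      by_contra h
      exact hmem (Finset.mem_insert_of_mem ((hφfin.union hψfin).mem_toFinset.mpr (Or.inl h)))
    have hψ0 : ψ μ = 0 := by
      by_contra h
      exact hmem (Finset.mem_insert_of_mem ((hφfin.union hψfin).mem_toFinset.mpr (Or.inr h)))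
    simp [hφ0, hψ0] at hμ
  set Z : ℤ → P := dscSol nb φ ψ s e z_in with hZ
  have hZneg : ∀ k : ℤ, k < 0 → Z k = 0 := by
    intro k hk
    simp [hZ, dscSol, not_le.mpr hk]
  have hZnat : ∀ k : ℕ, Z (k : ℤ) = dscAux nb φ ψ s e z_in k := by
    intro k
    simp [hZ, dscSol]
  -- Z satisfies the equations
  have hZeq : ∀ k : ℕ,
      (∑ μ ∈ s,
          (φ μ (z_in ((k : ℤ) - μ) + Z ((k : ℤ) - μ)) +
            ψ μ (nb (z_in ((k : ℤ) - μ)) + nb (Z ((k : ℤ) - μ - 1))))) = 0 := by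
    intro k
    have hsplit : ∀ μ ∈ s,
        φ μ (z_in ((k : ℤ) - μ) + Z ((k : ℤ) - μ)) +
            ψ μ (nb (z_in ((k : ℤ) - μ)) + nb (Z ((k : ℤ) - μ - 1)))
        = ((if μ = 0 then 0 else φ μ (Z ((k : ℤ) - μ))) + φ μ (z_in ((k : ℤ) - μ)) +
            ψ μ (nb (z_in ((k : ℤ) - μ)) + nb (Z ((k : ℤ) - μ - 1))))
          + (if μ = 0 then (φ 0) (Z (k : ℤ)) else 0) := by
      intro μ _
      rw [map_add]
      by_cases hμ : μ = 0
      · subst hμ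
        simp only [if_pos rfl, Nat.cast_zero, sub_zero, ↓reduceIte, zero_add, add_zero]
        abel
      · simp only [if_neg hμ]
        abel
    rw [Finset.sum_congr rfl hsplit, Finset.sum_add_distrib, Finset.sum_ite_eq' s 0, if_pos h0s]
    have : (φ 0) (Z (k : ℤ)) = e (dscAux nb φ ψ s e z_in k) := by
      rw [hZnat, ← he]; rfl
    rw [this, dscAux_eq, map_neg, LinearEquiv.apply_symm_apply]
    simp [hZ]
  refine ⟨Z, ⟨hZneg, fun k => by rw [hsum Z k]; exact hZeq k⟩, ?_⟩
  -- uniqueness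
  rintro w ⟨hwneg, hweq⟩
  have key : ∀ n : ℕ, w (n : ℤ) = Z (n : ℤ) := by
    intro n
    induction n using Nat.strong_induction_on with
    | _ n ih =>
      have hd : ∀ j : ℤ, j < (n : ℤ) → w j = Z j := by
        intro j hj
        by_cases h0 : 0 ≤ j
        · have : j = ((j.toNat : ℕ) : ℤ) := by omega
          rw [this, ih j.toNat (by omega)]
        · rw [hwneg j (by omega), hZneg j (by omega)]
      have h1 := hweq n
      have h2 := hZeq n
      rw [hsum w n] at h1
      have h3 : ∑ μ ∈ s, ((φ μ (z_in ((n : ℤ) - μ) + w ((n : ℤ) - μ)) +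
            ψ μ (nb (z_in ((n : ℤ) - μ)) + nb (w ((n : ℤ) - μ - 1))))
          - (φ μ (z_in ((n : ℤ) - μ) + Z ((n : ℤ) - μ)) +
            ψ μ (nb (z_in ((n : ℤ) - μ)) + nb (Z ((n : ℤ) - μ - 1))))) = 0 := by
        rw [Finset.sum_sub_distrib, h1, h2, sub_zero]
      have h4 : ∀ μ ∈ s, μ ≠ 0 → ((φ μ (z_in ((n : ℤ) - μ) + w ((n : ℤ) - μ)) +
            ψ μ (nb (z_in ((n : ℤ) - μ)) + nb (w ((n : ℤ) - μ - 1))))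
          - (φ μ (z_in ((n : ℤ) - μ) + Z ((n : ℤ) - μ)) +
            ψ μ (nb (z_in ((n : ℤ) - μ)) + nb (Z ((n : ℤ) - μ - 1))))) = 0 := by
        intro μ _ hμ
        rw [hd ((n : ℤ) - μ) (by omega), hd ((n : ℤ) - μ - 1) (by omega), sub_self]
      rw [Finset.sum_eq_single_of_mem 0 h0s (fun μ hμ h => h4 μ hμ h)] at h3
      rw [hd ((n : ℤ) - (0 : ℕ) - 1) (by omega)] at h3
      have h5 : (φ 0) (w ((n : ℤ) - (0 : ℕ))) = (φ 0) (Z ((n : ℤ) - (0 : ℕ))) := by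
        have h3' := sub_eq_zero.mp h3
        simp only [map_add] at h3'
        exact add_left_cancel (add_right_cancel h3')
      have h6 : e (w ((n : ℤ) - (0 : ℕ))) = e (Z ((n : ℤ) - (0 : ℕ))) := by
        rw [← LinearEquiv.coe_coe, he]; exact h5
      have h7 := e.injective h6
      simpa using h7
  funext j
  by_cases h0 : 0 ≤ j
  · have : j = ((j.toNat : ℕ) : ℤ) := by omega
    rw [this, key]
  · rw [hwneg j (by omega), hZneg j (by omega)]
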